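/- In any tree, every uncountable subset contains either an uncountable chain or an infinite antichain. -/

import Mathlib

universe u

/-- In any tree (a partial order in which the set of predecessors of each element is
well-ordered), every uncountable subset contains either an uncountable chain or an infinite
antichain. -/
theorem uncountable_subset_of_tree {T : Type u} [PartialOrder T]
    (htree : ∀ t : T, IsWellOrder (Set.Iio t) (fun a b => (a : T) < b))
    (A : Set T) (hA : ¬ A.Countable) :
    (∃ C ⊆ A, IsChain (· ≤ ·) C ∧ ¬ C.Countable) ∨
    (∃ D ⊆ A, IsAntichain (· ≤ ·) D ∧ D.Infinite) := by
  by_contra hcon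
  push_neg at hcon
  obtain ⟨h1, h2⟩ := hcon
  -- comparability of elements below a common element
  have hcompb : ∀ t x y : T, x < t → y < t → x ≤ y ∨ y ≤ x := by
    intro t x y hx hy
    haveI := htree t
    rcases trichotomous_of (fun a b : Set.Iio t => (a : T) < b) ⟨x, hx⟩ ⟨y, hy⟩ with h | h | h
    · exact Or.inl h.le
    · exact Or.inl (le_of_eq (congrArg Subtype.val h))
    · exact Or.inr h.le
  -- minimal elements below a given element
  have hleast : ∀ (S : Set T) (x : T), x ∈ S → ∃ m ∈ S, m ≤ x ∧ ∀ y ∈ S, ¬ y < m := by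
    intro S x hx
    by_cases hmin : ∀ y ∈ S, ¬ y < x
    · exact ⟨x, hx, le_refl x, hmin⟩
    · push_neg at hmin
      obtain ⟨y, hyS, hyx⟩ := hmin
      have hwf := (htree x).toIsWellFounded.wf
      obtain ⟨m, hmS, hmmin⟩ := hwf.has_min {a : Set.Iio x | (a : T) ∈ S} ⟨⟨y, hyx⟩, hyS⟩
      refine ⟨(m : T), hmS, le_of_lt m.2, ?_⟩
      intro z hz hzm
      exact hmmin ⟨z, lt_trans hzm m.2⟩ hz hzm
  -- uncountable subsets of A contain a "big" element
  have hbigsel : ∀ S : Set T, S ⊆ A → ¬ S.Countable →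
      ∃ m ∈ S, ¬ (A ∩ Set.Ici m).Countable := by
    intro S hSA hS
    set M : Set T := {m | m ∈ S ∧ ∀ y ∈ S, ¬ y < m} with hM
    have hManti : IsAntichain (· ≤ ·) M := by
      intro m hm m' hm' hne hle
      exact hm'.2 m hm.1 (lt_of_le_of_ne hle hne)
    have hMfin : M.Finite :=
      (h2 M (fun m hm => hSA hm.1) hManti)
    have hcover : S ⊆ ⋃ m ∈ M, (S ∩ Set.Ici m) := by
      intro x hx
      obtain ⟨m, hmS, hmx, hmmin⟩ := hleast S x hx
      exact Set.mem_biUnion (⟨hmS, hmmin⟩ : m ∈ M) ⟨hx, hmx⟩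
    by_contra hall
    push_neg at hall
    apply hS
    apply Set.Countable.mono hcover
    apply Set.Countable.biUnion hMfin.countable
    intro m hm
    exact (hall m hm.1).mono (Set.inter_subset_inter hSA (le_refl _))
  -- every big element has a big element strictly above it
  have hsucc : ∀ b, b ∈ A → ¬ (A ∩ Set.Ici b).Countable →
      ∃ m, m ∈ A ∧ b < m ∧ ¬ (A ∩ Set.Ici m).Countable := by
    intro b hbA hb
    have hS : ¬ ((A ∩ Set.Ici b) \ {b}).Countable := by
      intro hcnt
      apply hb
      have : (A ∩ Set.Ici b) ⊆ insert b ((A ∩ Set.Ici b) \ {b}) := by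
        intro x hx
        by_cases hxb : x = b
        · simp [hxb]
        · exact Set.mem_insert_iff.mpr (Or.inr ⟨hx, by simp [hxb]⟩)
      exact (hcnt.insert b).mono this
    obtain ⟨m, hmS, hmbig⟩ := hbigsel _ (fun x hx => hx.1.1) hS
    have hmb : b < m := lt_of_le_of_ne hmS.1.2 (fun h => hmS.2 (by simp [h.symm]))
    exact ⟨m, hmS.1.1, hmb, hmbig⟩
  -- step lemma: from a big element, find a big b > a and c > a incomparable to b
  have hstep : ∀ a, a ∈ A → ¬ (A ∩ Set.Ici a).Countable →
      ∃ b c : T, b ∈ A ∧ c ∈ A ∧ a < b ∧ a < c ∧ ¬ (A ∩ Set.Ici b).Countable ∧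
        ¬ b ≤ c ∧ ¬ c ≤ b := by
    intro a haA ha
    by_contra hno
    push_neg at hno
    -- hno: every big b > a is comparable to every c ∈ A with c > a
    set V : Set T := {b | b ∈ A ∧ a < b ∧ ¬ (A ∩ Set.Ici b).Countable} with hV
    have hVcomp : ∀ b ∈ V, ∀ c, c ∈ A → a < c → b ≤ c ∨ c ≤ b := by
      intro b hb c hc hac
      by_cases h : b ≤ c
      · exact Or.inl h
      · exact Or.inr (hno b c hb.1 hc hb.2.1 hac hb.2.2 h)
    have hVsucc : ∀ b ∈ V, ∃ b' ∈ V, b < b' := by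
      intro b hb
      obtain ⟨m, hmA, hbm, hmbig⟩ := hsucc b hb.1 hb.2.2
      exact ⟨m, ⟨hmA, lt_trans hb.2.1 hbm, hmbig⟩, hbm⟩
    set L : Set T := {c | c ∈ A ∧ a < c ∧ ∃ b ∈ V, c < b} with hL
    set H : Set T := {c | c ∈ A ∧ a < c ∧ ∀ b ∈ V, b ≤ c} with hHdef
    have hLchain : IsChain (· ≤ ·) L := by
      intro p hp q hq hne
      obtain ⟨b, hb, hpb⟩ := hp.2.2
      obtain ⟨b', hb', hqb'⟩ := hq.2.2
      rcases hVcomp b hb b' hb'.1 hb'.2.1 with h | h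
      · exact hcompb b' p q (lt_of_lt_of_le hpb h) hqb'
      · exact hcompb b p q hpb (lt_of_lt_of_le hqb' h)
    have hLcnt : L.Countable := h1 L (fun x hx => hx.1) hLchain
    have hcover : (A ∩ Set.Ici a) ⊆ insert a (L ∪ H) := by
      intro c hc
      by_cases hca : c = a
      · simp [hca]
      have hcA : c ∈ A := hc.1
      have hac : a < c := lt_of_le_of_ne hc.2 (fun h => hca h.symm)
      refine Set.mem_insert_iff.mpr (Or.inr ?_)
      by_cases hH : ∀ b ∈ V, b ≤ c
      · exact Or.inr ⟨hcA, hac, hH⟩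
      · push_neg at hH
        obtain ⟨b, hbV, hbc⟩ := hH
        rcases hVcomp b hbV c hcA hac with h | h
        · exact absurd h hbc
        · exact Or.inl ⟨hcA, hac, b, hbV,
            lt_of_le_of_ne h (fun he => hbc (le_of_eq he.symm))⟩
    have hHunc : ¬ H.Countable := by
      intro hH
      exact ha (Set.Countable.mono hcover ((hLcnt.union hH).insert a))
    obtain ⟨m, hmH, hmbig⟩ := hbigsel H (fun x hx => hx.1) hHunc
    have hmV : m ∈ V := ⟨hmH.1, hmH.2.1, hmbig⟩
    obtain ⟨b', hb'V, hmb'⟩ := hVsucc m hmV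
    exact absurd (hmH.2.2 b' hb'V) (not_le_of_gt hmb')
  -- starting big element
  obtain ⟨x0, hx0A, hx0big⟩ := hbigsel A (le_refl A) hA
  -- skolemize the step lemma
  have hstep' : ∀ p : {t : T // t ∈ A ∧ ¬ (A ∩ Set.Ici t).Countable},
      ∃ q : {t : T // t ∈ A ∧ ¬ (A ∩ Set.Ici t).Countable} × T,
        (p : T) < (q.1 : T) ∧ q.2 ∈ A ∧ (p : T) < q.2 ∧
          ¬ (q.1 : T) ≤ q.2 ∧ ¬ q.2 ≤ (q.1 : T) := by
    intro p
    obtain ⟨b, c, hbA, hcA, hab, hac, hbbig, hi1, hi2⟩ := hstep p p.2.1 p.2.2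
    exact ⟨(⟨b, hbA, hbbig⟩, c), hab, hcA, hac, hi1, hi2⟩
  choose F hF1 hF2 hF3 hF4 hF5 using hstep'
  let f : ℕ → {t : T // t ∈ A ∧ ¬ (A ∩ Set.Ici t).Countable} :=
    fun n => Nat.rec ⟨x0, hx0A, hx0big⟩ (fun _ p => (F p).1) n
  have hfs : ∀ n, f (n + 1) = (F (f n)).1 := fun n => rfl
  let x : ℕ → T := fun n => (f n).val
  let c : ℕ → T := fun n => (F (f n)).2
  have hxlt : ∀ n, x n < x (n + 1) := by
    intro n
    show (f n).val < (f (n + 1)).val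
    rw [hfs n]
    exact hF1 (f n)
  have hxmono : StrictMono x := strictMono_nat_of_lt_succ hxlt
  have hcA : ∀ n, c n ∈ A := fun n => hF2 (f n)
  have hxc : ∀ n, x n < c n := fun n => hF3 (f n)
  have hinc1 : ∀ n, ¬ x (n + 1) ≤ c n := by
    intro n
    show ¬ (f (n + 1)).val ≤ (F (f n)).2
    rw [hfs n]
    exact hF4 (f n)
  have hinc2 : ∀ n, ¬ c n ≤ x (n + 1) := by
    intro n
    show ¬ (F (f n)).2 ≤ (f (n + 1)).val
    rw [hfs n]
    exact hF5 (f n)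
  -- the c's are pairwise incomparable
  have hpair : ∀ i j, i < j → ¬ c i ≤ c j ∧ ¬ c j ≤ c i := by
    intro i j hij
    have hxij : x (i + 1) ≤ x j := hxmono.monotone (Nat.succ_le_of_lt hij)
    have hxicj : x (i + 1) < c j := lt_of_le_of_lt hxij (hxc j)
    constructor
    · intro hle
      rcases eq_or_lt_of_le hle with he | hlt
      · exact hinc1 i (le_of_lt (he ▸ hxicj))
      · rcases hcompb (c j) (c i) (x (i + 1)) hlt hxicj with h | h
        · exact hinc2 i h
        · exact hinc1 i h
    · intro hle
      exact hinc1 i (le_trans (le_of_lt hxicj) hle)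
  have hcinj : Function.Injective c := by
    intro i j he
    by_contra hne
    rcases lt_or_gt_of_ne hne with h | h
    · exact (hpair i j h).1 (le_of_eq he)
    · exact (hpair j i h).1 (le_of_eq he.symm)
  have hanti : IsAntichain (· ≤ ·) (Set.range c) := by
    rintro _ ⟨i, rfl⟩ _ ⟨j, rfl⟩ hne hle
    have hij : i ≠ j := fun h => hne (by rw [h])
    rcases lt_or_gt_of_ne hij with h | h
    · exact (hpair i j h).1 hle
    · exact (hpair j i h).2 hle
  exact (Set.infinite_range_of_injective hcinj)
    (h2 (Set.range c) (Set.range_subset_iff.mpr hcA) hanti)
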